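/- The closed long ray ω₁ × [0,1) with the lexicographic order topology is ω-bounded: every countable subset has compact closure. -/

import Mathlib

/-- The closed long ray: ω₁ × [0,1) with the lexicographic order. -/
def LongRay : Type 1 :=
  ↥(Set.Iio (Cardinal.aleph 1).ord) ×ₗ ↥(Set.Ico (0 : ℝ) 1)

noncomputable instance : LinearOrder LongRay :=
  inferInstanceAs (LinearOrder (↥(Set.Iio (Cardinal.aleph 1).ord) ×ₗ ↥(Set.Ico (0 : ℝ) 1)))

noncomputable instance : TopologicalSpace LongRay := Preorder.topology LongRay

instance : OrderTopology LongRay := ⟨rfl⟩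

namespace LongRayAux

open Cardinal Set

noncomputable abbrev Omega1 : Ordinal := (Cardinal.aleph 1).ord

lemma omega1_isLimit : Order.IsSuccLimit Omega1 :=
  Cardinal.isSuccLimit_ord (by simpa using Cardinal.aleph0_le_aleph 1)

noncomputable def OO : Type 1 := ↥(Set.Iio Omega1)
noncomputable def II : Type := ↥(Set.Ico (0 : ℝ) 1)

noncomputable def zeroO : ↥(Set.Iio Omega1) := ⟨0, omega1_isLimit.pos⟩
noncomputable def zeroI : ↥(Set.Ico (0 : ℝ) 1) := ⟨0, by norm_num⟩

noncomputable def botLR : LongRay := toLex (zeroO, zeroI)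

lemma bot_le' (x : LongRay) : botLR ≤ x := by
  refine (Prod.Lex.le_iff (x := toLex (ofLex botLR)) (y := toLex (ofLex x))).mpr ?_
  rcases eq_or_lt_of_le (zero_le (a := ((ofLex x).1 : Ordinal))) with h | h
  · exact Or.inr ⟨Subtype.ext (show ((zeroO : ↥(Set.Iio Omega1)) : Ordinal) = _ from h),
      show (0 : ℝ) ≤ _ from (ofLex x).2.2.1⟩
  · exact Or.inl (show (0 : Ordinal) < _ from h)

noncomputable instance : Inhabited LongRay := ⟨botLR⟩

lemma exists_isLUB (s : Set LongRay) (hne : s.Nonempty) (hbdd : BddAbove s) :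
    ∃ x : LongRay, IsLUB s x := by
  obtain ⟨b, hb⟩ := hbdd
  -- the set of first coordinates, as ordinals
  set F : Set Ordinal := (fun x : LongRay => ((ofLex x).1 : Ordinal)) '' s with hF
  have hFne : F.Nonempty := hne.image _
  have hub : ((ofLex b).1 : Ordinal) ∈ upperBounds F := by
    rintro a ⟨x, hx, rfl⟩
    exact Subtype.coe_le_coe.mpr (Prod.Lex.monotone_fst _ _ (hb hx))
  have hFbdd : BddAbove F := ⟨_, hub⟩
  set α : Ordinal := sSup F with hα
  have hα_mem : ∀ x ∈ s, ((ofLex x).1 : Ordinal) ≤ α :=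
    fun x hx => le_csSup hFbdd ⟨x, hx, rfl⟩
  have hα_lt : α < Omega1 := by
    have h1 : α ≤ ((ofLex b).1 : Ordinal) := csSup_le hFne hub
    exact lt_of_le_of_lt h1 (ofLex b).1.2
  set αO : ↥(Set.Iio Omega1) := ⟨α, hα_lt⟩ with hαO
  -- a key fact: any upper bound u of s has first coordinate ≥ α
  have key : ∀ u ∈ upperBounds s, α ≤ ((ofLex u).1 : Ordinal) := by
    intro u hu
    by_contra hlt
    push_neg at hlt
    obtain ⟨a, ⟨x, hx, rfl⟩, hxa⟩ := exists_lt_of_lt_csSup hFne hlt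
    have := Prod.Lex.monotone_fst _ _ (hu hx)
    exact absurd (Subtype.coe_le_coe.mpr this) (not_le.mpr hxa)
  by_cases hatt : ∃ x ∈ s, (ofLex x).1 = αO
  · obtain ⟨x₀, hx₀s, hx₀⟩ := hatt
    set T : Set ℝ := {t : ℝ | ∃ x ∈ s, (ofLex x).1 = αO ∧ ((ofLex x).2 : ℝ) = t} with hT
    have hTne : T.Nonempty := ⟨((ofLex x₀).2 : ℝ), x₀, hx₀s, hx₀, rfl⟩
    have hTbdd : BddAbove T := by
      refine ⟨1, ?_⟩
      rintro t ⟨x, hx, hx1, rfl⟩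
      exact le_of_lt (ofLex x).2.2.2
    set r : ℝ := sSup T with hr
    have hr0 : 0 ≤ r :=
      le_trans (ofLex x₀).2.2.1 (le_csSup hTbdd ⟨x₀, hx₀s, hx₀, rfl⟩)
    have hr1 : r ≤ 1 := csSup_le hTne (by
      rintro t ⟨x, hx, hx1, rfl⟩
      exact le_of_lt (ofLex x).2.2.2)
    -- second coordinates of upper bounds with first coordinate αO bound T
    have key2 : ∀ u ∈ upperBounds s, (ofLex u).1 = αO → r ≤ ((ofLex u).2 : ℝ) := by
      intro u hu hu1
      refine csSup_le hTne ?_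
      rintro t ⟨x, hx, hx1, rfl⟩
      rcases (Prod.Lex.le_iff (x := toLex (ofLex x)) (y := toLex (ofLex u))).mp (hu hx) with h | h
      · exact absurd (hx1 ▸ hu1 ▸ h) (lt_irrefl _)
      · exact Subtype.coe_le_coe.mpr h.2
    by_cases hrlt : r < 1
    · refine ⟨toLex (αO, ⟨r, hr0, hrlt⟩), ?_, ?_⟩
      · intro x hx
        refine (Prod.Lex.le_iff (x := toLex (ofLex x))).mpr ?_
        rcases eq_or_lt_of_le (hα_mem x hx) with h | h
        · exact Or.inr ⟨Subtype.ext h, Subtype.coe_le_coe.mp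
            (le_csSup hTbdd ⟨x, hx, Subtype.ext h, rfl⟩)⟩
        · exact Or.inl (Subtype.mk_lt_mk.mpr h)
      · intro u hu
        refine (Prod.Lex.le_iff (y := toLex (ofLex u))).mpr ?_
        rcases eq_or_lt_of_le (key u hu) with h | h
        · exact Or.inr ⟨Subtype.ext h, Subtype.coe_le_coe.mp (key2 u hu (Subtype.ext h.symm))⟩
        · exact Or.inl (Subtype.mk_lt_mk.mpr h)
    · -- r = 1 : the least upper bound is (α+1, 0)
      have hr1' : r = 1 := le_antisymm hr1 (not_lt.mp hrlt)
      refine ⟨toLex (⟨Order.succ α, omega1_isLimit.succ_lt hα_lt⟩, zeroI), ?_, ?_⟩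
      · intro x hx
        refine (Prod.Lex.le_iff (x := toLex (ofLex x))).mpr (Or.inl ?_)
        exact Subtype.mk_lt_mk.mpr (Order.lt_succ_iff.mpr (hα_mem x hx))
      · intro u hu
        have hsucc : Order.succ α ≤ ((ofLex u).1 : Ordinal) := by
          refine Order.succ_le_of_lt (lt_of_le_of_ne (key u hu) ?_)
          intro heq
          have := key2 u hu (Subtype.ext heq.symm)
          rw [hr1'] at this
          exact absurd (lt_of_le_of_lt this (ofLex u).2.2.2) (lt_irrefl _)
        refine (Prod.Lex.le_iff (y := toLex (ofLex u))).mpr ?_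
        rcases eq_or_lt_of_le hsucc with h | h
        · refine Or.inr ⟨Subtype.ext h, ?_⟩
          exact Subtype.coe_le_coe.mp (by simpa [zeroI] using (ofLex u).2.2.1)
        · exact Or.inl (Subtype.mk_lt_mk.mpr h)
  · -- sup not attained : the least upper bound is (α, 0)
    refine ⟨toLex (αO, zeroI), ?_, ?_⟩
    · intro x hx
      refine (Prod.Lex.le_iff (x := toLex (ofLex x))).mpr (Or.inl ?_)
      refine Subtype.mk_lt_mk.mpr (lt_of_le_of_ne (hα_mem x hx) ?_)
      exact fun h => hatt ⟨x, hx, Subtype.ext h⟩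
    · intro u hu
      refine (Prod.Lex.le_iff (y := toLex (ofLex u))).mpr ?_
      rcases eq_or_lt_of_le (key u hu) with h | h
      · refine Or.inr ⟨Subtype.ext h, ?_⟩
        exact Subtype.coe_le_coe.mp (by simpa [zeroI] using (ofLex u).2.2.1)
      · exact Or.inl (Subtype.mk_lt_mk.mpr h)

open Classical in
noncomputable instance : SupSet LongRay :=
  ⟨fun s => if h : s.Nonempty ∧ BddAbove s then (exists_isLUB s h.1 h.2).choose else botLR⟩

open Classical in
lemma sSup_def (s : Set LongRay) :
    sSup s = if h : s.Nonempty ∧ BddAbove s then (exists_isLUB s h.1 h.2).choose else botLR :=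
  rfl

noncomputable instance : ConditionallyCompleteLinearOrder LongRay :=
  { (inferInstance : LinearOrder LongRay),
    conditionallyCompleteLatticeOfLatticeOfsSup LongRay (fun s hb hne => by
      rw [sSup_def, dif_pos ⟨hne, hb⟩]
      exact (exists_isLUB s hne hb).choose_spec) with
    csSup_of_not_bddAbove := fun s hs => by
      rw [sSup_def, dif_neg (fun h => hs h.2), sSup_def,
        dif_neg (fun h => Set.not_nonempty_empty h.1)]
    csInf_of_not_bddBelow := fun s hs => absurd ⟨botLR, fun x _ => bot_le' x⟩ hs }

lemma bddAbove_of_countable {A : Set LongRay} (hA : A.Countable) (hne : A.Nonempty) :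
    BddAbove A := by
  obtain ⟨f, rfl⟩ := hA.exists_eq_range hne
  set g : ℕ → Ordinal := fun n => ((ofLex (f n)).1 : Ordinal) with hg
  have hγ : iSup g < Omega1 := by
    refine Cardinal.iSup_lt_ord_of_isRegular Cardinal.isRegular_aleph_one ?_ ?_
    · simpa using Cardinal.aleph0_lt_aleph_one
    · exact fun n => (ofLex (f n)).1.2
  refine ⟨toLex (⟨Order.succ (iSup g), omega1_isLimit.succ_lt hγ⟩, zeroI), ?_⟩
  rintro x ⟨n, rfl⟩
  refine (Prod.Lex.le_iff (x := toLex (ofLex (f n)))).mpr (Or.inl ?_)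
  refine Subtype.mk_lt_mk.mpr (Order.lt_succ_iff.mpr ?_)
  exact le_ciSup (Ordinal.bddAbove_range g) n

end LongRayAux

open LongRayAux in
/-- The closed long ray is ω-bounded: every countable subset has compact closure. -/
theorem stmt_12 (A : Set LongRay) (hA : A.Countable) : IsCompact (closure A) := by
  rcases A.eq_empty_or_nonempty with rfl | hne
  · rw [closure_empty]; exact isCompact_empty
  · obtain ⟨b, hb⟩ := bddAbove_of_countable hA hne
    have hsub : closure A ⊆ Set.Icc botLR b :=
      closure_minimal (fun x hx => ⟨bot_le' x, hb hx⟩) isClosed_Icc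
    exact isCompact_Icc.of_isClosed_subset isClosed_closure hsub
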